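/- arXiv:2501.00155 — 4 statements merged into one kernel-verified Lean document; each statement's English description precedes it below -/
import Mathlib

section
/- Assume b = e = 0 (with a, d ∈ ℝ arbitrary). Let u be a solution of the Longstaff–Schwartz equation on Ω, and let ε ∈ ℝ. Then the function w(x,y,t) = (1 + tε)^{-2(a+d)} · exp( 2ε(x+y)/(1 + tε) ) · u( x/(1 + tε)², y/(1 + tε)², t/(1 + tε) ) satisfies the Longstaff–Schwartz equation at every point (x,y,t) ∈ Ω with 1 + tε > 0. -/
/-- Partial derivative in `x`. -/
noncomputable def pdX (u : ℝ → ℝ → ℝ → ℝ) (x y t : ℝ) : ℝ := deriv (fun z => u z y t) x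

/-- Partial derivative in `y`. -/
noncomputable def pdY (u : ℝ → ℝ → ℝ → ℝ) (x y t : ℝ) : ℝ := deriv (fun z => u x z t) y

/-- Partial derivative in `t`. -/
noncomputable def pdT (u : ℝ → ℝ → ℝ → ℝ) (x y t : ℝ) : ℝ := deriv (fun z => u x y z) t

/-- Second partial derivative in `x`. -/
noncomputable def pdXX (u : ℝ → ℝ → ℝ → ℝ) (x y t : ℝ) : ℝ := deriv (fun z => pdX u z y t) x

/-- Second partial derivative in `y`. -/
noncomputable def pdYY (u : ℝ → ℝ → ℝ → ℝ) (x y t : ℝ) : ℝ := deriv (fun z => pdY u x z t) y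

/-- The domain `Ω = {(x,y,t) : x > 0, y > 0}`. -/
def Omega : Set (ℝ × ℝ × ℝ) := {p | 0 < p.1 ∧ 0 < p.2.1}

/-- The Longstaff–Schwartz (Kolmogorov backward) equation
`u_t = −((a−bx)·u_x + (d−ey)·u_y + (x/2)·u_xx + (y/2)·u_yy)` holds at the point `(x,y,t)`. -/
def LSEq (a b d e : ℝ) (u : ℝ → ℝ → ℝ → ℝ) (x y t : ℝ) : Prop :=
  pdT u x y t =
    -((a - b * x) * pdX u x y t + (d - e * y) * pdY u x y t +
      x / 2 * pdXX u x y t + y / 2 * pdYY u x y t)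

/-- `u` is a solution of the Longstaff–Schwartz equation on `Ω`: it is C² on `Ω` and
satisfies the equation at every point of `Ω`. -/
def IsLSSolution (a b d e : ℝ) (u : ℝ → ℝ → ℝ → ℝ) : Prop :=
  ContDiffOn ℝ 2 (fun p : ℝ × ℝ × ℝ => u p.1 p.2.1 p.2.2) Omega ∧
  ∀ x y t : ℝ, 0 < x → 0 < y → LSEq a b d e u x y t



lemma omega_open : IsOpen Omega := by
  have : Omega = (fun p : ℝ×ℝ×ℝ => p.1) ⁻¹' Set.Ioi 0 ∩ (fun p : ℝ×ℝ×ℝ => p.2.1) ⁻¹' Set.Ioi 0 := rfl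
  rw [this]
  exact (isOpen_Ioi.preimage continuous_fst).inter
    (isOpen_Ioi.preimage (continuous_fst.comp continuous_snd))

lemma clm_decomp (L : ℝ×ℝ×ℝ →L[ℝ] ℝ) (v : ℝ×ℝ×ℝ) :
    L v = v.1 * L (1,0,0) + v.2.1 * L (0,1,0) + v.2.2 * L (0,0,1) := by
  have hv : v = v.1 • ((1:ℝ),(0:ℝ),(0:ℝ)) + v.2.1 • ((0:ℝ),(1:ℝ),(0:ℝ))
      + v.2.2 • ((0:ℝ),(0:ℝ),(1:ℝ)) := by
    refine Prod.ext ?_ (Prod.ext ?_ ?_) <;> simp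
  conv_lhs => rw [hv]
  simp only [map_add, map_smul, smul_eq_mul]

lemma sliceX (u : ℝ → ℝ → ℝ → ℝ) {x y t : ℝ}
    (h : DifferentiableAt ℝ (fun p : ℝ×ℝ×ℝ => u p.1 p.2.1 p.2.2) (x,y,t)) :
    HasDerivAt (fun z => u z y t)
      (fderiv ℝ (fun p : ℝ×ℝ×ℝ => u p.1 p.2.1 p.2.2) (x,y,t) (1,0,0)) x := by
  have hc : HasDerivAt (fun z : ℝ => ((z,y,t) : ℝ×ℝ×ℝ)) ((1:ℝ),(0:ℝ),(0:ℝ)) x :=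
    (hasDerivAt_id x).prodMk ((hasDerivAt_const x y).prodMk (hasDerivAt_const x t))
  exact h.hasFDerivAt.comp_hasDerivAt x hc


lemma sliceY (u : ℝ → ℝ → ℝ → ℝ) {x y t : ℝ}
    (h : DifferentiableAt ℝ (fun p : ℝ×ℝ×ℝ => u p.1 p.2.1 p.2.2) (x,y,t)) :
    HasDerivAt (fun z => u x z t)
      (fderiv ℝ (fun p : ℝ×ℝ×ℝ => u p.1 p.2.1 p.2.2) (x,y,t) (0,1,0)) y := by
  have hc : HasDerivAt (fun z : ℝ => ((x,z,t) : ℝ×ℝ×ℝ)) ((0:ℝ),(1:ℝ),(0:ℝ)) y :=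
    (hasDerivAt_const y x).prodMk ((hasDerivAt_id y).prodMk (hasDerivAt_const y t))
  exact h.hasFDerivAt.comp_hasDerivAt y hc

lemma sliceT (u : ℝ → ℝ → ℝ → ℝ) {x y t : ℝ}
    (h : DifferentiableAt ℝ (fun p : ℝ×ℝ×ℝ => u p.1 p.2.1 p.2.2) (x,y,t)) :
    HasDerivAt (fun z => u x y z)
      (fderiv ℝ (fun p : ℝ×ℝ×ℝ => u p.1 p.2.1 p.2.2) (x,y,t) (0,0,1)) t := by
  have hc : HasDerivAt (fun z : ℝ => ((x,y,z) : ℝ×ℝ×ℝ)) ((0:ℝ),(0:ℝ),(1:ℝ)) t :=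
    (hasDerivAt_const t x).prodMk ((hasDerivAt_const t y).prodMk (hasDerivAt_id t))
  exact h.hasFDerivAt.comp_hasDerivAt t hc

section main
variable {u : ℝ → ℝ → ℝ → ℝ}
  (hU : ContDiffOn ℝ 2 (fun p : ℝ×ℝ×ℝ => u p.1 p.2.1 p.2.2) Omega)

include hU

lemma diffOmega {x y t : ℝ} (hx : 0 < x) (hy : 0 < y) :
    DifferentiableAt ℝ (fun p : ℝ×ℝ×ℝ => u p.1 p.2.1 p.2.2) (x,y,t) := by
  have hmem : ((x,y,t) : ℝ×ℝ×ℝ) ∈ Omega := ⟨hx, hy⟩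
  exact (hU.contDiffAt (omega_open.mem_nhds hmem)).differentiableAt (by norm_num)

lemma pdX_eq {x y t : ℝ} (hx : 0 < x) (hy : 0 < y) :
    pdX u x y t = fderiv ℝ (fun p : ℝ×ℝ×ℝ => u p.1 p.2.1 p.2.2) (x,y,t) (1,0,0) :=
  (sliceX u (diffOmega hU hx hy)).deriv

lemma pdY_eq {x y t : ℝ} (hx : 0 < x) (hy : 0 < y) :
    pdY u x y t = fderiv ℝ (fun p : ℝ×ℝ×ℝ => u p.1 p.2.1 p.2.2) (x,y,t) (0,1,0) :=
  (sliceY u (diffOmega hU hx hy)).deriv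

lemma pdT_eq {x y t : ℝ} (hx : 0 < x) (hy : 0 < y) :
    pdT u x y t = fderiv ℝ (fun p : ℝ×ℝ×ℝ => u p.1 p.2.1 p.2.2) (x,y,t) (0,0,1) :=
  (sliceT u (diffOmega hU hx hy)).deriv

lemma key_pdX {x y t : ℝ} (hx : 0 < x) (hy : 0 < y) :
    HasDerivAt (fun z => u z y t) (pdX u x y t) x := by
  rw [pdX_eq hU hx hy]; exact sliceX u (diffOmega hU hx hy)

lemma key_pdY {x y t : ℝ} (hx : 0 < x) (hy : 0 < y) :
    HasDerivAt (fun z => u x z t) (pdY u x y t) y := by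
  rw [pdY_eq hU hx hy]; exact sliceY u (diffOmega hU hx hy)

lemma key_pdXX {x y t : ℝ} (hx : 0 < x) (hy : 0 < y) :
    HasDerivAt (fun z => pdX u z y t) (pdXX u x y t) x := by
  set U : ℝ×ℝ×ℝ → ℝ := fun p => u p.1 p.2.1 p.2.2 with hUdef
  have hF : ContDiffOn ℝ 1 (fderiv ℝ U) Omega :=
    hU.fderiv_of_isOpen omega_open (by norm_num)
  have hmem : ((x,y,t) : ℝ×ℝ×ℝ) ∈ Omega := ⟨hx, hy⟩
  have hFd : DifferentiableAt ℝ (fderiv ℝ U) (x,y,t) :=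
    (hF.contDiffAt (omega_open.mem_nhds hmem)).differentiableAt one_ne_zero
  have hc : HasDerivAt (fun z : ℝ => ((z,y,t) : ℝ×ℝ×ℝ)) ((1:ℝ),(0:ℝ),(0:ℝ)) x :=
    (hasDerivAt_id x).prodMk ((hasDerivAt_const x y).prodMk (hasDerivAt_const x t))
  have h1 : HasDerivAt (fun z : ℝ => fderiv ℝ U (z,y,t))
      (fderiv ℝ (fderiv ℝ U) (x,y,t) (1,0,0)) x :=
    hFd.hasFDerivAt.comp_hasDerivAt x hc
  have h2 : HasDerivAt (fun z : ℝ => fderiv ℝ U (z,y,t) (1,0,0))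
      (fderiv ℝ (fderiv ℝ U) (x,y,t) (1,0,0) (1,0,0)) x :=
    (ContinuousLinearMap.apply ℝ ℝ ((1:ℝ),(0:ℝ),(0:ℝ))).hasFDerivAt.comp_hasDerivAt x h1
  have hev : (fun z : ℝ => pdX u z y t) =ᶠ[nhds x] fun z : ℝ => fderiv ℝ U (z,y,t) (1,0,0) := by
    filter_upwards [(isOpen_Ioi (a := (0:ℝ))).eventually_mem hx] with z hz
    exact pdX_eq hU hz hy
  have h3 : HasDerivAt (fun z : ℝ => pdX u z y t)
      (fderiv ℝ (fderiv ℝ U) (x,y,t) (1,0,0) (1,0,0)) x :=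
    h2.congr_of_eventuallyEq hev
  rw [pdXX]; rw [h3.deriv]; exact h3

lemma key_pdYY {x y t : ℝ} (hx : 0 < x) (hy : 0 < y) :
    HasDerivAt (fun z => pdY u x z t) (pdYY u x y t) y := by
  set U : ℝ×ℝ×ℝ → ℝ := fun p => u p.1 p.2.1 p.2.2 with hUdef
  have hF : ContDiffOn ℝ 1 (fderiv ℝ U) Omega :=
    hU.fderiv_of_isOpen omega_open (by norm_num)
  have hmem : ((x,y,t) : ℝ×ℝ×ℝ) ∈ Omega := ⟨hx, hy⟩
  have hFd : DifferentiableAt ℝ (fderiv ℝ U) (x,y,t) :=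
    (hF.contDiffAt (omega_open.mem_nhds hmem)).differentiableAt one_ne_zero
  have hc : HasDerivAt (fun z : ℝ => ((x,z,t) : ℝ×ℝ×ℝ)) ((0:ℝ),(1:ℝ),(0:ℝ)) y :=
    (hasDerivAt_const y x).prodMk ((hasDerivAt_id y).prodMk (hasDerivAt_const y t))
  have h1 : HasDerivAt (fun z : ℝ => fderiv ℝ U (x,z,t))
      (fderiv ℝ (fderiv ℝ U) (x,y,t) (0,1,0)) y :=
    hFd.hasFDerivAt.comp_hasDerivAt y hc
  have h2 : HasDerivAt (fun z : ℝ => fderiv ℝ U (x,z,t) (0,1,0))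
      (fderiv ℝ (fderiv ℝ U) (x,y,t) (0,1,0) (0,1,0)) y :=
    (ContinuousLinearMap.apply ℝ ℝ ((0:ℝ),(1:ℝ),(0:ℝ))).hasFDerivAt.comp_hasDerivAt y h1
  have hev : (fun z : ℝ => pdY u x z t) =ᶠ[nhds y] fun z : ℝ => fderiv ℝ U (x,z,t) (0,1,0) := by
    filter_upwards [(isOpen_Ioi (a := (0:ℝ))).eventually_mem hy] with z hz
    exact pdY_eq hU hx hz
  have h3 : HasDerivAt (fun z : ℝ => pdY u x z t)
      (fderiv ℝ (fderiv ℝ U) (x,y,t) (0,1,0) (0,1,0)) y :=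
    h2.congr_of_eventuallyEq hev
  rw [pdYY]; rw [h3.deriv]; exact h3

end main


set_option maxHeartbeats 2000000 in
/-- Symmetry of the Longstaff–Schwartz equation when `b = e = 0` (subcase 2.4, group `G₁`). -/
theorem ls_symmetry_b_e_zero_G1 (a b d e : ℝ) (hb : b = 0) (he : e = 0)
    (u : ℝ → ℝ → ℝ → ℝ) (hu : IsLSSolution a b d e u) (ε : ℝ) :
    ∀ x y t : ℝ, 0 < x → 0 < y → 1 + t * ε > 0 →
      LSEq a b d e
        (fun x y t =>
          (1 + t * ε) ^ (-(2 * (a + d))) *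
            Real.exp (2 * ε * (x + y) / (1 + t * ε)) *
            u (x / (1 + t * ε) ^ 2) (y / (1 + t * ε) ^ 2) (t / (1 + t * ε)))
        x y t := by
  obtain ⟨hU, hpde⟩ := hu
  subst hb; subst he
  intro x y t hx hy hs
  have hsne : (1 : ℝ) + t * ε ≠ 0 := ne_of_gt hs
  have hs2pos : (0:ℝ) < (1 + t * ε) ^ 2 := by positivity
  have hXpos : 0 < x / (1 + t * ε) ^ 2 := div_pos hx hs2pos
  have hYpos : 0 < y / (1 + t * ε) ^ 2 := div_pos hy hs2pos
  have hdiv : ∀ z : ℝ, HasDerivAt (fun z' : ℝ => z' / (1 + t * ε) ^ 2)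
      (1 / (1 + t * ε) ^ 2) z := fun z => by
    simpa using (hasDerivAt_id z).div_const ((1 + t * ε) ^ 2)
  have hgenX : ∀ z : ℝ, 0 < z → HasDerivAt
      (fun z' => (1 + t * ε) ^ (-(2 * (a + d))) * Real.exp (2 * ε * (z' + y) / (1 + t * ε)) * u (z' / (1 + t * ε) ^ 2) (y / (1 + t * ε) ^ 2) (t / (1 + t * ε)))
      ((1 + t * ε) ^ (-(2 * (a + d))) * Real.exp (2 * ε * (z + y) / (1 + t * ε)) * (2 * ε / (1 + t * ε)) * u (z / (1 + t * ε) ^ 2) (y / (1 + t * ε) ^ 2) (t / (1 + t * ε)) + (1 + t * ε) ^ (-(2 * (a + d))) * Real.exp (2 * ε * (z + y) / (1 + t * ε)) * pdX u (z / (1 + t * ε) ^ 2) (y / (1 + t * ε) ^ 2) (t / (1 + t * ε)) / (1 + t * ε) ^ 2) z := by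
    intro z hz
    have hzpos : 0 < z / (1 + t * ε) ^ 2 := div_pos hz hs2pos
    have hV : HasDerivAt
        (fun z' : ℝ => u (z' / (1 + t * ε) ^ 2) (y / (1 + t * ε) ^ 2) (t / (1 + t * ε)))
        (pdX u (z / (1 + t * ε) ^ 2) (y / (1 + t * ε) ^ 2) (t / (1 + t * ε)) * (1 / (1 + t * ε) ^ 2)) z :=
      by have := (key_pdX (t := t / (1 + t * ε)) hU hzpos hYpos).comp z (hdiv z); exact this
    have hlin : HasDerivAt (fun z' : ℝ => 2 * ε * (z' + y) / (1 + t * ε))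
        (2 * ε * 1 / (1 + t * ε)) z :=
      (((hasDerivAt_id z).add_const y).const_mul (2 * ε)).div_const (1 + t * ε)
    have h := (hlin.exp.const_mul ((1 + t * ε) ^ (-(2 * (a + d))))).fun_mul hV
    refine h.congr_deriv ?_
    ring
  have hgenY : ∀ z : ℝ, 0 < z → HasDerivAt
      (fun z' => (1 + t * ε) ^ (-(2 * (a + d))) * Real.exp (2 * ε * (x + z') / (1 + t * ε)) * u (x / (1 + t * ε) ^ 2) (z' / (1 + t * ε) ^ 2) (t / (1 + t * ε)))
      ((1 + t * ε) ^ (-(2 * (a + d))) * Real.exp (2 * ε * (x + z) / (1 + t * ε)) * (2 * ε / (1 + t * ε)) * u (x / (1 + t * ε) ^ 2) (z / (1 + t * ε) ^ 2) (t / (1 + t * ε)) + (1 + t * ε) ^ (-(2 * (a + d))) * Real.exp (2 * ε * (x + z) / (1 + t * ε)) * pdY u (x / (1 + t * ε) ^ 2) (z / (1 + t * ε) ^ 2) (t / (1 + t * ε)) / (1 + t * ε) ^ 2) z := by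
    intro z hz
    have hzpos : 0 < z / (1 + t * ε) ^ 2 := div_pos hz hs2pos
    have hV : HasDerivAt
        (fun z' : ℝ => u (x / (1 + t * ε) ^ 2) (z' / (1 + t * ε) ^ 2) (t / (1 + t * ε)))
        (pdY u (x / (1 + t * ε) ^ 2) (z / (1 + t * ε) ^ 2) (t / (1 + t * ε)) * (1 / (1 + t * ε) ^ 2)) z :=
      by have := (key_pdY (t := t / (1 + t * ε)) hU hXpos hzpos).comp z (hdiv z); exact this
    have hlin : HasDerivAt (fun z' : ℝ => 2 * ε * (x + z') / (1 + t * ε))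
        (2 * ε * 1 / (1 + t * ε)) z :=
      (((hasDerivAt_id z).const_add x).const_mul (2 * ε)).div_const (1 + t * ε)
    have h := (hlin.exp.const_mul ((1 + t * ε) ^ (-(2 * (a + d))))).fun_mul hV
    refine h.congr_deriv ?_
    ring
  -- second derivative in x
  have hXXfun : HasDerivAt
      (fun z : ℝ => (1 + t * ε) ^ (-(2 * (a + d))) * Real.exp (2 * ε * (z + y) / (1 + t * ε)) * (2 * ε / (1 + t * ε)) * u (z / (1 + t * ε) ^ 2) (y / (1 + t * ε) ^ 2) (t / (1 + t * ε)) + (1 + t * ε) ^ (-(2 * (a + d))) * Real.exp (2 * ε * (z + y) / (1 + t * ε)) * pdX u (z / (1 + t * ε) ^ 2) (y / (1 + t * ε) ^ 2) (t / (1 + t * ε)) / (1 + t * ε) ^ 2)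
      ((1 + t * ε) ^ (-(2 * (a + d))) * Real.exp (2 * ε * (x + y) / (1 + t * ε)) * (2 * ε / (1 + t * ε)) * (2 * ε / (1 + t * ε)) * u (x / (1 + t * ε) ^ 2) (y / (1 + t * ε) ^ 2) (t / (1 + t * ε)) + 2 * ((1 + t * ε) ^ (-(2 * (a + d))) * Real.exp (2 * ε * (x + y) / (1 + t * ε)) * (2 * ε / (1 + t * ε)) * pdX u (x / (1 + t * ε) ^ 2) (y / (1 + t * ε) ^ 2) (t / (1 + t * ε)) / (1 + t * ε) ^ 2) + (1 + t * ε) ^ (-(2 * (a + d))) * Real.exp (2 * ε * (x + y) / (1 + t * ε)) * pdXX u (x / (1 + t * ε) ^ 2) (y / (1 + t * ε) ^ 2) (t / (1 + t * ε)) / (1 + t * ε) ^ 2 / (1 + t * ε) ^ 2) x := by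
    have hlin : HasDerivAt (fun z' : ℝ => 2 * ε * (z' + y) / (1 + t * ε))
        (2 * ε * 1 / (1 + t * ε)) x :=
      (((hasDerivAt_id x).add_const y).const_mul (2 * ε)).div_const (1 + t * ε)
    have hE := hlin.exp
    have hV : HasDerivAt
        (fun z' : ℝ => u (z' / (1 + t * ε) ^ 2) (y / (1 + t * ε) ^ 2) (t / (1 + t * ε)))
        (pdX u (x / (1 + t * ε) ^ 2) (y / (1 + t * ε) ^ 2) (t / (1 + t * ε)) * (1 / (1 + t * ε) ^ 2)) x :=
      by have := (key_pdX (t := t / (1 + t * ε)) hU hXpos hYpos).comp x (hdiv x); exact this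
    have hPX : HasDerivAt
        (fun z' : ℝ => pdX u (z' / (1 + t * ε) ^ 2) (y / (1 + t * ε) ^ 2) (t / (1 + t * ε)))
        (pdXX u (x / (1 + t * ε) ^ 2) (y / (1 + t * ε) ^ 2) (t / (1 + t * ε)) * (1 / (1 + t * ε) ^ 2)) x :=
      by have := (key_pdXX (t := t / (1 + t * ε)) hU hXpos hYpos).comp x (hdiv x); exact this
    have h1 := ((hE.const_mul ((1 + t * ε) ^ (-(2 * (a + d))))).mul_const (2 * ε / (1 + t * ε))).fun_mul hV
    have h2 := ((hE.const_mul ((1 + t * ε) ^ (-(2 * (a + d))))).fun_mul hPX).div_const ((1 + t * ε) ^ 2)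
    have h := h1.fun_add h2
    refine h.congr_deriv ?_
    ring
  have hYYfun : HasDerivAt
      (fun z : ℝ => (1 + t * ε) ^ (-(2 * (a + d))) * Real.exp (2 * ε * (x + z) / (1 + t * ε)) * (2 * ε / (1 + t * ε)) * u (x / (1 + t * ε) ^ 2) (z / (1 + t * ε) ^ 2) (t / (1 + t * ε)) + (1 + t * ε) ^ (-(2 * (a + d))) * Real.exp (2 * ε * (x + z) / (1 + t * ε)) * pdY u (x / (1 + t * ε) ^ 2) (z / (1 + t * ε) ^ 2) (t / (1 + t * ε)) / (1 + t * ε) ^ 2)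
      ((1 + t * ε) ^ (-(2 * (a + d))) * Real.exp (2 * ε * (x + y) / (1 + t * ε)) * (2 * ε / (1 + t * ε)) * (2 * ε / (1 + t * ε)) * u (x / (1 + t * ε) ^ 2) (y / (1 + t * ε) ^ 2) (t / (1 + t * ε)) + 2 * ((1 + t * ε) ^ (-(2 * (a + d))) * Real.exp (2 * ε * (x + y) / (1 + t * ε)) * (2 * ε / (1 + t * ε)) * pdY u (x / (1 + t * ε) ^ 2) (y / (1 + t * ε) ^ 2) (t / (1 + t * ε)) / (1 + t * ε) ^ 2) + (1 + t * ε) ^ (-(2 * (a + d))) * Real.exp (2 * ε * (x + y) / (1 + t * ε)) * pdYY u (x / (1 + t * ε) ^ 2) (y / (1 + t * ε) ^ 2) (t / (1 + t * ε)) / (1 + t * ε) ^ 2 / (1 + t * ε) ^ 2) y := by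
    have hlin : HasDerivAt (fun z' : ℝ => 2 * ε * (x + z') / (1 + t * ε))
        (2 * ε * 1 / (1 + t * ε)) y :=
      (((hasDerivAt_id y).const_add x).const_mul (2 * ε)).div_const (1 + t * ε)
    have hE := hlin.exp
    have hV : HasDerivAt
        (fun z' : ℝ => u (x / (1 + t * ε) ^ 2) (z' / (1 + t * ε) ^ 2) (t / (1 + t * ε)))
        (pdY u (x / (1 + t * ε) ^ 2) (y / (1 + t * ε) ^ 2) (t / (1 + t * ε)) * (1 / (1 + t * ε) ^ 2)) y :=
      by have := (key_pdY (t := t / (1 + t * ε)) hU hXpos hYpos).comp y (hdiv y); exact this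
    have hPY : HasDerivAt
        (fun z' : ℝ => pdY u (x / (1 + t * ε) ^ 2) (z' / (1 + t * ε) ^ 2) (t / (1 + t * ε)))
        (pdYY u (x / (1 + t * ε) ^ 2) (y / (1 + t * ε) ^ 2) (t / (1 + t * ε)) * (1 / (1 + t * ε) ^ 2)) y :=
      by have := (key_pdYY (t := t / (1 + t * ε)) hU hXpos hYpos).comp y (hdiv y); exact this
    have h1 := ((hE.const_mul ((1 + t * ε) ^ (-(2 * (a + d))))).mul_const (2 * ε / (1 + t * ε))).fun_mul hV
    have h2 := ((hE.const_mul ((1 + t * ε) ^ (-(2 * (a + d))))).fun_mul hPY).div_const ((1 + t * ε) ^ 2)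
    have h := h1.fun_add h2
    refine h.congr_deriv ?_
    ring
  have hevX : (fun z : ℝ => deriv (fun z' => (1 + t * ε) ^ (-(2 * (a + d))) * Real.exp (2 * ε * (z' + y) / (1 + t * ε)) * u (z' / (1 + t * ε) ^ 2) (y / (1 + t * ε) ^ 2) (t / (1 + t * ε))) z)
      =ᶠ[nhds x] (fun z : ℝ => (1 + t * ε) ^ (-(2 * (a + d))) * Real.exp (2 * ε * (z + y) / (1 + t * ε)) * (2 * ε / (1 + t * ε)) * u (z / (1 + t * ε) ^ 2) (y / (1 + t * ε) ^ 2) (t / (1 + t * ε)) + (1 + t * ε) ^ (-(2 * (a + d))) * Real.exp (2 * ε * (z + y) / (1 + t * ε)) * pdX u (z / (1 + t * ε) ^ 2) (y / (1 + t * ε) ^ 2) (t / (1 + t * ε)) / (1 + t * ε) ^ 2) := by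
    filter_upwards [(isOpen_Ioi (a := (0:ℝ))).eventually_mem hx] with z hz
    exact (hgenX z hz).deriv
  have hevY : (fun z : ℝ => deriv (fun z' => (1 + t * ε) ^ (-(2 * (a + d))) * Real.exp (2 * ε * (x + z') / (1 + t * ε)) * u (x / (1 + t * ε) ^ 2) (z' / (1 + t * ε) ^ 2) (t / (1 + t * ε))) z)
      =ᶠ[nhds y] (fun z : ℝ => (1 + t * ε) ^ (-(2 * (a + d))) * Real.exp (2 * ε * (x + z) / (1 + t * ε)) * (2 * ε / (1 + t * ε)) * u (x / (1 + t * ε) ^ 2) (z / (1 + t * ε) ^ 2) (t / (1 + t * ε)) + (1 + t * ε) ^ (-(2 * (a + d))) * Real.exp (2 * ε * (x + z) / (1 + t * ε)) * pdY u (x / (1 + t * ε) ^ 2) (z / (1 + t * ε) ^ 2) (t / (1 + t * ε)) / (1 + t * ε) ^ 2) := by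
    filter_upwards [(isOpen_Ioi (a := (0:ℝ))).eventually_mem hy] with z hz
    exact (hgenY z hz).deriv
  have hXX := hXXfun.congr_of_eventuallyEq hevX
  have hYY := hYYfun.congr_of_eventuallyEq hevY
  -- t derivative
  have hs0 : HasDerivAt (fun z : ℝ => 1 + z * ε) ε t := by
    simpa using ((hasDerivAt_id t).mul_const ε).const_add 1
  have hA : HasDerivAt (fun z : ℝ => (1 + z * ε) ^ (-(2 * (a + d))))
      (-(2 * (a + d)) * ((1 + t * ε) ^ (-(2 * (a + d))) / (1 + t * ε)) * ε) t := by
    have h := hs0.rpow_const (p := -(2 * (a + d))) (Or.inl hsne)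
    rw [show (1 + t * ε) ^ (-(2 * (a + d)) - 1) = (1 + t * ε) ^ (-(2 * (a + d))) / (1 + t * ε) by
      rw [Real.rpow_sub hs, Real.rpow_one]] at h
    convert h using 1
    ring
  have hEin : HasDerivAt (fun z : ℝ => 2 * ε * (x + y) / (1 + z * ε))
      (-(2 * ε ^ 2 * (x + y)) / (1 + t * ε) ^ 2) t := by
    have h := (hasDerivAt_const t (2 * ε * (x + y))).fun_div hs0 hsne
    refine h.congr_deriv ?_
    ring
  have hexpT := hEin.exp
  have hXc : HasDerivAt (fun z : ℝ => x / (1 + z * ε) ^ 2)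
      (-(2 * x * ε / (1 + t * ε) ^ 3)) t := by
    have h := (hasDerivAt_const t x).fun_div (hs0.fun_pow 2) (pow_ne_zero 2 hsne)
    refine h.congr_deriv ?_
    field_simp
    ring
  have hYc : HasDerivAt (fun z : ℝ => y / (1 + z * ε) ^ 2)
      (-(2 * y * ε / (1 + t * ε) ^ 3)) t := by
    have h := (hasDerivAt_const t y).fun_div (hs0.fun_pow 2) (pow_ne_zero 2 hsne)
    refine h.congr_deriv ?_
    field_simp
    ring
  have hTc : HasDerivAt (fun z : ℝ => z / (1 + z * ε)) (1 / (1 + t * ε) ^ 2) t := by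
    have h := (hasDerivAt_id' t).fun_div hs0 hsne
    refine h.congr_deriv ?_
    field_simp
    ring
  have hγ : HasDerivAt
      (fun z : ℝ => ((x / (1 + z * ε) ^ 2, y / (1 + z * ε) ^ 2, z / (1 + z * ε)) : ℝ × ℝ × ℝ))
      ((-(2 * x * ε / (1 + t * ε) ^ 3), -(2 * y * ε / (1 + t * ε) ^ 3),
        1 / (1 + t * ε) ^ 2) : ℝ × ℝ × ℝ) t := hXc.prodMk (hYc.prodMk hTc)
  have hq : DifferentiableAt ℝ (fun p : ℝ × ℝ × ℝ => u p.1 p.2.1 p.2.2)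
      ((x / (1 + t * ε) ^ 2), (y / (1 + t * ε) ^ 2), (t / (1 + t * ε))) := diffOmega hU hXpos hYpos
  have hUcomp := hq.hasFDerivAt.comp_hasDerivAt t hγ
  have hsplit : (fderiv ℝ (fun p : ℝ × ℝ × ℝ => u p.1 p.2.1 p.2.2) ((x / (1 + t * ε) ^ 2), (y / (1 + t * ε) ^ 2), (t / (1 + t * ε))))
      ((-(2 * x * ε / (1 + t * ε) ^ 3), -(2 * y * ε / (1 + t * ε) ^ 3),
        1 / (1 + t * ε) ^ 2) : ℝ × ℝ × ℝ) =
      -(2 * x * ε / (1 + t * ε) ^ 3) * pdX u (x / (1 + t * ε) ^ 2) (y / (1 + t * ε) ^ 2) (t / (1 + t * ε)) +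
      -(2 * y * ε / (1 + t * ε) ^ 3) * pdY u (x / (1 + t * ε) ^ 2) (y / (1 + t * ε) ^ 2) (t / (1 + t * ε)) +
      1 / (1 + t * ε) ^ 2 * pdT u (x / (1 + t * ε) ^ 2) (y / (1 + t * ε) ^ 2) (t / (1 + t * ε)) := by
    rw [clm_decomp]
    rw [← pdX_eq hU hXpos hYpos, ← pdY_eq hU hXpos hYpos, ← pdT_eq hU hXpos hYpos]
  have hUc : HasDerivAt
      (fun z : ℝ => u (x / (1 + z * ε) ^ 2) (y / (1 + z * ε) ^ 2) (z / (1 + z * ε)))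
      (-(2 * x * ε / (1 + t * ε) ^ 3) * pdX u (x / (1 + t * ε) ^ 2) (y / (1 + t * ε) ^ 2) (t / (1 + t * ε)) +
       -(2 * y * ε / (1 + t * ε) ^ 3) * pdY u (x / (1 + t * ε) ^ 2) (y / (1 + t * ε) ^ 2) (t / (1 + t * ε)) +
       1 / (1 + t * ε) ^ 2 * pdT u (x / (1 + t * ε) ^ 2) (y / (1 + t * ε) ^ 2) (t / (1 + t * ε))) t := by
    rw [← hsplit]; exact hUcomp
  have hT' : HasDerivAt (fun z : ℝ => (1 + z * ε) ^ (-(2 * (a + d))) * Real.exp (2 * ε * (x + y) / (1 + z * ε)) * u (x / (1 + z * ε) ^ 2) (y / (1 + z * ε) ^ 2) (z / (1 + z * ε))) ((-(2 * (a + d)) * ((1 + t * ε) ^ (-(2 * (a + d))) / (1 + t * ε)) * ε * Real.exp (2 * ε * (x + y) / (1 + t * ε)) + (1 + t * ε) ^ (-(2 * (a + d))) * (Real.exp (2 * ε * (x + y) / (1 + t * ε)) * (-(2 * ε ^ 2 * (x + y)) / (1 + t * ε) ^ 2))) * u (x / (1 + t * ε) ^ 2) (y / (1 + t * ε) ^ 2)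 (t / (1 + t * ε)) + (1 + t * ε) ^ (-(2 * (a + d))) * Real.exp (2 * ε * (x + y) / (1 + t * ε)) * (-(2 * x * ε / (1 + t * ε) ^ 3) * pdX u (x / (1 + t * ε) ^ 2) (y / (1 + t * ε) ^ 2) (t / (1 + t * ε)) + -(2 * y * ε / (1 + t * ε) ^ 3) * pdY u (x / (1 + t * ε) ^ 2) (y / (1 + t * ε) ^ 2) (t / (1 + t * ε)) + 1 / (1 + t * ε) ^ 2 * pdT u (x / (1 + t * ε) ^ 2) (y / (1 + t * ε) ^ 2) (t / (1 + t * ε)))) t := (hA.mul hexpT).mul hUc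
  -- the PDE for u at the transformed point
  have hR := hpde (x / (1 + t * ε) ^ 2) (y / (1 + t * ε) ^ 2) (t / (1 + t * ε)) hXpos hYpos
  simp only [LSEq] at hR
  simp only [LSEq, pdT, pdX, pdY, pdXX, pdYY]
  rw [hXX.deriv, hYY.deriv, hT'.deriv, (hgenX x hx).deriv, (hgenY y hy).deriv, hR]
  field_simp
  ring
end

section
/- Assume b = e = 0 (with a, d ∈ ℝ arbitrary). Let u be a solution of the Longstaff–Schwartz equation on Ω, and let ε ∈ ℝ. Then the function w(x,y,t) = u( e^{-ε}x, e^{-ε}y, e^{-ε}t ) is also a solution of the Longstaff–Schwartz equation on Ω. -/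
lemma deriv_comp_const_mul' (c : ℝ) (hc : c ≠ 0) (f : ℝ → ℝ) (x : ℝ) :
    deriv (fun z => f (c * z)) x = c * deriv f (c * x) := by
  by_cases h : DifferentiableAt ℝ f (c * x)
  · have h1 : HasDerivAt (fun z : ℝ => c * z) c x := by
      simpa using (hasDerivAt_id x).const_mul c
    have := (h.hasDerivAt.comp x h1)
    rw [show (fun z => f (c*z)) = f ∘ (HMul.hMul c) from rfl, this.deriv]; ring
  · rw [deriv_zero_of_not_differentiableAt h]
    rw [deriv_zero_of_not_differentiableAt]
    · ring
    · intro h2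
      apply h
      have : f = fun w => (fun z => f (c * z)) (c⁻¹ * w) := by
        funext w; simp [mul_inv_cancel_left₀ hc]
      rw [this]
      have h3 : DifferentiableAt ℝ (fun z => f (c * z)) (c⁻¹ * (c * x)) := by
        rwa [inv_mul_cancel_left₀ hc]
      exact h3.comp _ (by simpa using ((differentiableAt_id (𝕜 := ℝ)).const_mul c⁻¹))

/-- Symmetry of the Longstaff–Schwartz equation when `b = e = 0` (subcase 2.4, group `G₂`):
scaling `(x,y,t) ↦ (e^{-ε}x, e^{-ε}y, e^{-ε}t)` maps solutions to solutions on `Ω`. -/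
theorem ls_symmetry_b_e_zero_scaling (a b d e : ℝ) (hb : b = 0) (he : e = 0)
    (u : ℝ → ℝ → ℝ → ℝ) (hu : IsLSSolution a b d e u) (ε : ℝ) :
    IsLSSolution a b d e
      (fun x y t => u (Real.exp (-ε) * x) (Real.exp (-ε) * y) (Real.exp (-ε) * t)) := by
  set c := Real.exp (-ε) with hcdef
  have hcpos : 0 < c := Real.exp_pos _
  have hc : c ≠ 0 := ne_of_gt hcpos
  set w : ℝ → ℝ → ℝ → ℝ := fun x y t => u (c * x) (c * y) (c * t) with hw
  constructor
  · -- smoothness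
    have hg : ContDiff ℝ 2 (fun p : ℝ × ℝ × ℝ => ((c * p.1, c * p.2.1, c * p.2.2) : ℝ × ℝ × ℝ)) := by
      exact (ContDiff.prodMk (contDiff_const.mul contDiff_fst)
        (ContDiff.prodMk (contDiff_const.mul (contDiff_fst.comp contDiff_snd))
          (contDiff_const.mul (contDiff_snd.comp contDiff_snd))))
    have hmaps : Set.MapsTo (fun p : ℝ × ℝ × ℝ => ((c * p.1, c * p.2.1, c * p.2.2) : ℝ × ℝ × ℝ))
        Omega Omega := by
      intro p hp
      exact ⟨mul_pos hcpos hp.1, mul_pos hcpos hp.2⟩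
    exact (hu.1.comp hg.contDiffOn hmaps)
  · intro x y t hx hy
    have hX : ∀ x y t : ℝ, pdX w x y t = c * pdX u (c * x) (c * y) (c * t) := by
      intro x y t
      exact deriv_comp_const_mul' c hc (fun z => u z (c * y) (c * t)) x
    have hY : ∀ x y t : ℝ, pdY w x y t = c * pdY u (c * x) (c * y) (c * t) := by
      intro x y t
      exact deriv_comp_const_mul' c hc (fun z => u (c * x) z (c * t)) y
    have hT : pdT w x y t = c * pdT u (c * x) (c * y) (c * t) := by
      exact deriv_comp_const_mul' c hc (fun z => u (c * x) (c * y) z) t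
    have hXX : pdXX w x y t = c * c * pdXX u (c * x) (c * y) (c * t) := by
      have : (fun z => pdX w z y t) = fun z => c * pdX u (c * z) (c * y) (c * t) := by
        funext z; exact hX z y t
      rw [pdXX, this]
      rw [deriv_const_mul_field]
      rw [deriv_comp_const_mul' c hc (fun z => pdX u z (c * y) (c * t)) x]
      rw [pdXX]; ring
    have hYY : pdYY w x y t = c * c * pdYY u (c * x) (c * y) (c * t) := by
      have : (fun z => pdY w x z t) = fun z => c * pdY u (c * x) (c * z) (c * t) := by
        funext z; exact hY x z t
      rw [pdYY, this]
      rw [deriv_const_mul_field]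
      rw [deriv_comp_const_mul' c hc (fun z => pdY u (c * x) z (c * t)) y]
      rw [pdYY]; ring
    have hEq := hu.2 (c * x) (c * y) (c * t) (mul_pos hcpos hx) (mul_pos hcpos hy)
    rw [LSEq] at hEq ⊢
    subst hb he
    rw [hT, hX, hY, hXX, hYY]
    rw [hEq]; ring
end

section
/- Assume a = 1/4 and b = 0 (with d, e ∈ ℝ arbitrary). Let u be a solution of the Longstaff–Schwartz equation on Ω, and let ε ∈ ℝ. Then the function w(x,y,t) = exp( ε·(4√x − tε)/2 ) · u( (2√x − tε)²/4, y, t ) satisfies the Longstaff–Schwartz equation at every point (x,y,t) ∈ Ω with 2√x > tε. -/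
set_option maxHeartbeats 1000000 in
/-- Symmetry of the Longstaff–Schwartz equation when `a = 1/4` and `b = 0`
(subcase 3.4, group `G₄`). -/
theorem ls_symmetry_a_quarter_b_zero (a b d e : ℝ) (ha : a = 1 / 4) (hb : b = 0)
    (u : ℝ → ℝ → ℝ → ℝ) (hu : IsLSSolution a b d e u) (ε : ℝ) :
    ∀ x y t : ℝ, 0 < x → 0 < y → 2 * Real.sqrt x > t * ε →
      LSEq a b d e
        (fun x y t =>
          Real.exp (ε * (4 * Real.sqrt x - t * ε) / 2) *
            u ((2 * Real.sqrt x - t * ε) ^ 2 / 4) y t)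
        x y t := by
  subst ha hb
  obtain ⟨hC2, hEqn⟩ := hu
  intro x y t hx hy hq2
  have hs0 : 0 < Real.sqrt x := Real.sqrt_pos.mpr hx
  have hsx : Real.sqrt x ≠ 0 := hs0.ne'
  have hq0 : 0 < 2 * Real.sqrt x - t * ε := sub_pos.mpr hq2
  have hX0 : 0 < (2 * Real.sqrt x - t * ε) ^ 2 / 4 :=
    div_pos (pow_pos hq0 2) (by norm_num)
  have hOmega : IsOpen Omega :=
    (isOpen_lt continuous_const continuous_fst).inter
      (isOpen_lt continuous_const (continuous_fst.comp continuous_snd))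
  -- regularity of the x-line restriction
  have hg2 : ContDiffOn ℝ 2 (fun z => u z y t) (Set.Ioi 0) :=
    hC2.comp (contDiff_id.prodMk (contDiff_const.prodMk contDiff_const)).contDiffOn
      (fun z hz => ⟨hz, hy⟩)
  have hgd : ∀ z : ℝ, 0 < z → DifferentiableAt ℝ (fun z' => u z' y t) z := fun z hz =>
    (hg2.contDiffAt (Ioi_mem_nhds hz)).differentiableAt two_ne_zero
  have hdg1 : ContDiffOn ℝ 1 (deriv (fun z => u z y t)) (Set.Ioi 0) :=
    hg2.deriv_of_isOpen isOpen_Ioi (by norm_num)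
  have hdgd : DifferentiableAt ℝ (deriv (fun z => u z y t))
      ((2 * Real.sqrt x - t * ε) ^ 2 / 4) :=
    (hdg1.contDiffAt (Ioi_mem_nhds hX0)).differentiableAt one_ne_zero
  -- joint differentiability at the shifted point
  have hFd : DifferentiableAt ℝ (fun p : ℝ × ℝ × ℝ => u p.1 p.2.1 p.2.2)
      ((2 * Real.sqrt x - t * ε) ^ 2 / 4, y, t) :=
    (hC2.contDiffAt (hOmega.mem_nhds ⟨hX0, hy⟩)).differentiableAt two_ne_zero
  obtain ⟨L, hL⟩ : ∃ L : ℝ × ℝ × ℝ →L[ℝ] ℝ, HasFDerivAt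
      (fun p : ℝ × ℝ × ℝ => u p.1 p.2.1 p.2.2) L
      ((2 * Real.sqrt x - t * ε) ^ 2 / 4, y, t) := ⟨_, hFd.hasFDerivAt⟩
  have hUx : deriv (fun z => u z y t) ((2 * Real.sqrt x - t * ε) ^ 2 / 4) = L (1, 0, 0) := by
    have hline : HasDerivAt (fun z : ℝ => ((z, y, t) : ℝ × ℝ × ℝ)) (1, 0, 0)
        ((2 * Real.sqrt x - t * ε) ^ 2 / 4) :=
      (hasDerivAt_id _).prodMk (hasDerivAt_const _ (y, t))
    exact (hL.comp_hasDerivAt _ hline).deriv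
  have hUt : pdT u ((2 * Real.sqrt x - t * ε) ^ 2 / 4) y t = L (0, 0, 1) := by
    have hline : HasDerivAt
        (fun z : ℝ => ((((2 * Real.sqrt x - t * ε) ^ 2 / 4 : ℝ), y, z) : ℝ × ℝ × ℝ))
        (0, 0, 1) t :=
      (hasDerivAt_const _ _).prodMk ((hasDerivAt_const _ _).prodMk (hasDerivAt_id _))
    exact (hL.comp_hasDerivAt _ hline).deriv
  -- generic derivative builders in the x variable
  have hφ : ∀ z : ℝ, 0 < z →
      HasDerivAt (fun z' => Real.exp (ε * (4 * Real.sqrt z' - t * ε) / 2))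
        (Real.exp (ε * (4 * Real.sqrt z - t * ε) / 2) * (ε / Real.sqrt z)) z := by
    intro z hz
    have hsz : Real.sqrt z ≠ 0 := (Real.sqrt_pos.mpr hz).ne'
    have h := (((((Real.hasDerivAt_sqrt hz.ne').const_mul 4).sub_const
      (t * ε)).const_mul ε).div_const 2).exp
    convert h using 1
    field_simp
    ring
  have hξ : ∀ z : ℝ, 0 < z →
      HasDerivAt (fun z' => (2 * Real.sqrt z' - t * ε) ^ 2 / 4)
        ((2 * Real.sqrt z - t * ε) / (2 * Real.sqrt z)) z := by
    intro z hz
    have hsz : Real.sqrt z ≠ 0 := (Real.sqrt_pos.mpr hz).ne'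
    have h := ((((Real.hasDerivAt_sqrt hz.ne').const_mul 2).sub_const (t * ε)).pow 2).div_const 4
    refine h.congr_deriv ?_
    push_cast
    field_simp
    ring
  have hGd : ∀ z : ℝ, 0 < z → t * ε < 2 * Real.sqrt z →
      HasDerivAt (fun z' => u ((2 * Real.sqrt z' - t * ε) ^ 2 / 4) y t)
        (deriv (fun w => u w y t) ((2 * Real.sqrt z - t * ε) ^ 2 / 4) *
          ((2 * Real.sqrt z - t * ε) / (2 * Real.sqrt z))) z := by
    intro z hz h2
    have hXz : 0 < (2 * Real.sqrt z - t * ε) ^ 2 / 4 :=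
      div_pos (pow_pos (sub_pos.mpr h2) 2) (by norm_num)
    exact ((hgd _ hXz).hasDerivAt).comp z (hξ z hz)
  have hWx : ∀ z : ℝ, 0 < z → t * ε < 2 * Real.sqrt z →
      HasDerivAt
        (fun z' => Real.exp (ε * (4 * Real.sqrt z' - t * ε) / 2) *
          u ((2 * Real.sqrt z' - t * ε) ^ 2 / 4) y t)
        (Real.exp (ε * (4 * Real.sqrt z - t * ε) / 2) *
          (ε / Real.sqrt z * u ((2 * Real.sqrt z - t * ε) ^ 2 / 4) y t +
           (2 * Real.sqrt z - t * ε) / (2 * Real.sqrt z) *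
             deriv (fun w => u w y t) ((2 * Real.sqrt z - t * ε) ^ 2 / 4))) z := by
    intro z hz h2
    have h := (hφ z hz).mul (hGd z hz h2)
    refine h.congr_deriv ?_
    ring
  -- pdX of the transformed function, on a neighborhood
  have hpdXf : ∀ z : ℝ, 0 < z → t * ε < 2 * Real.sqrt z →
      pdX (fun x y t => Real.exp (ε * (4 * Real.sqrt x - t * ε) / 2) *
          u ((2 * Real.sqrt x - t * ε) ^ 2 / 4) y t) z y t =
        Real.exp (ε * (4 * Real.sqrt z - t * ε) / 2) *
          (ε / Real.sqrt z * u ((2 * Real.sqrt z - t * ε) ^ 2 / 4) y t +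
           (2 * Real.sqrt z - t * ε) / (2 * Real.sqrt z) *
             deriv (fun w => u w y t) ((2 * Real.sqrt z - t * ε) ^ 2 / 4)) :=
    fun z hz h2 => (hWx z hz h2).deriv
  have hev : (fun z => pdX (fun x y t => Real.exp (ε * (4 * Real.sqrt x - t * ε) / 2) *
        u ((2 * Real.sqrt x - t * ε) ^ 2 / 4) y t) z y t) =ᶠ[nhds x]
      (fun z => Real.exp (ε * (4 * Real.sqrt z - t * ε) / 2) *
        (ε / Real.sqrt z * u ((2 * Real.sqrt z - t * ε) ^ 2 / 4) y t +
         (2 * Real.sqrt z - t * ε) / (2 * Real.sqrt z) *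
           deriv (fun w => u w y t) ((2 * Real.sqrt z - t * ε) ^ 2 / 4))) := by
    have h1 : ∀ᶠ z in nhds x, 0 < z := isOpen_Ioi.eventually_mem hx
    have h2 : ∀ᶠ z in nhds x, t * ε < 2 * Real.sqrt z :=
      (isOpen_lt continuous_const (continuous_const.mul Real.continuous_sqrt)).eventually_mem hq2
    filter_upwards [h1, h2] with z hz1 hz2
    exact hpdXf z hz1 hz2
  -- second x-derivative
  have hD : HasDerivAt
      (fun z => Real.exp (ε * (4 * Real.sqrt z - t * ε) / 2) *
        (ε / Real.sqrt z * u ((2 * Real.sqrt z - t * ε) ^ 2 / 4) y t +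
         (2 * Real.sqrt z - t * ε) / (2 * Real.sqrt z) *
           deriv (fun w => u w y t) ((2 * Real.sqrt z - t * ε) ^ 2 / 4)))
      (Real.exp (ε * (4 * Real.sqrt x - t * ε) / 2) *
        ((ε ^ 2 / Real.sqrt x ^ 2 - ε / (2 * Real.sqrt x ^ 3)) *
            u ((2 * Real.sqrt x - t * ε) ^ 2 / 4) y t +
         (ε * (2 * Real.sqrt x - t * ε) / Real.sqrt x ^ 2 +
            t * ε / (4 * Real.sqrt x ^ 3)) *
            deriv (fun w => u w y t) ((2 * Real.sqrt x - t * ε) ^ 2 / 4) +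
         (2 * Real.sqrt x - t * ε) ^ 2 / (4 * Real.sqrt x ^ 2) *
            deriv (deriv (fun w => u w y t)) ((2 * Real.sqrt x - t * ε) ^ 2 / 4))) x := by
    have hA : HasDerivAt (fun z => ε / Real.sqrt z)
        ((0 * Real.sqrt x - ε * (1 / (2 * Real.sqrt x))) / Real.sqrt x ^ 2) x :=
      (hasDerivAt_const x ε).div (Real.hasDerivAt_sqrt hx.ne') hsx
    have hB : HasDerivAt (fun z => (2 * Real.sqrt z - t * ε) / (2 * Real.sqrt z))
        ((2 * (1 / (2 * Real.sqrt x)) * (2 * Real.sqrt x) -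
          (2 * Real.sqrt x - t * ε) * (2 * (1 / (2 * Real.sqrt x)))) / (2 * Real.sqrt x) ^ 2) x :=
      (((Real.hasDerivAt_sqrt hx.ne').const_mul 2).sub_const (t * ε)).div
        ((Real.hasDerivAt_sqrt hx.ne').const_mul 2) (by positivity)
    have hdgc : HasDerivAt
        (fun z => deriv (fun w => u w y t) ((2 * Real.sqrt z - t * ε) ^ 2 / 4))
        (deriv (deriv (fun w => u w y t)) ((2 * Real.sqrt x - t * ε) ^ 2 / 4) *
          ((2 * Real.sqrt x - t * ε) / (2 * Real.sqrt x))) x :=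
      by have := (hdgd.hasDerivAt).comp x (hξ x hx); exact this
    have h := (hφ x hx).mul ((hA.mul (hGd x hx hq2)).add (hB.mul hdgc))
    simp only [Pi.mul_apply, Pi.add_apply] at h
    refine h.congr_deriv ?_
    generalize hgen : Real.sqrt x = S
    have hS : S ≠ 0 := by rw [← hgen]; exact hsx
    field_simp
    ring
  have hpdXXval : pdXX (fun x y t => Real.exp (ε * (4 * Real.sqrt x - t * ε) / 2) *
        u ((2 * Real.sqrt x - t * ε) ^ 2 / 4) y t) x y t =
      Real.exp (ε * (4 * Real.sqrt x - t * ε) / 2) *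
        ((ε ^ 2 / Real.sqrt x ^ 2 - ε / (2 * Real.sqrt x ^ 3)) *
            u ((2 * Real.sqrt x - t * ε) ^ 2 / 4) y t +
         (ε * (2 * Real.sqrt x - t * ε) / Real.sqrt x ^ 2 +
            t * ε / (4 * Real.sqrt x ^ 3)) *
            deriv (fun w => u w y t) ((2 * Real.sqrt x - t * ε) ^ 2 / 4) +
         (2 * Real.sqrt x - t * ε) ^ 2 / (4 * Real.sqrt x ^ 2) *
            deriv (deriv (fun w => u w y t)) ((2 * Real.sqrt x - t * ε) ^ 2 / 4)) := by
    have h0 : pdXX (fun x y t => Real.exp (ε * (4 * Real.sqrt x - t * ε) / 2) *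
        u ((2 * Real.sqrt x - t * ε) ^ 2 / 4) y t) x y t =
        deriv (fun z => Real.exp (ε * (4 * Real.sqrt z - t * ε) / 2) *
          (ε / Real.sqrt z * u ((2 * Real.sqrt z - t * ε) ^ 2 / 4) y t +
           (2 * Real.sqrt z - t * ε) / (2 * Real.sqrt z) *
             deriv (fun w => u w y t) ((2 * Real.sqrt z - t * ε) ^ 2 / 4))) x :=
      hev.deriv_eq
    rw [h0]
    exact hD.deriv
  have hpdXval := hpdXf x hx hq2
  -- t derivative
  have hφt : HasDerivAt (fun z => Real.exp (ε * (4 * Real.sqrt x - z * ε) / 2))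
      (Real.exp (ε * (4 * Real.sqrt x - t * ε) / 2) * (-(ε ^ 2) / 2)) t := by
    have h := (((((hasDerivAt_id t).mul_const ε).const_sub
      (4 * Real.sqrt x)).const_mul ε).div_const 2).exp
    simp only [id_eq] at h
    convert h using 1
    ring
  have hξt : HasDerivAt (fun z => (2 * Real.sqrt x - z * ε) ^ 2 / 4)
      (-((2 * Real.sqrt x - t * ε) * ε) / 2) t := by
    have h := ((((hasDerivAt_id t).mul_const ε).const_sub (2 * Real.sqrt x)).pow 2).div_const 4
    simp only [id_eq] at h
    refine h.congr_deriv ?_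
    push_cast
    ring
  have hcurve : HasDerivAt
      (fun z : ℝ => (((2 * Real.sqrt x - z * ε) ^ 2 / 4 : ℝ), y, z))
      (-((2 * Real.sqrt x - t * ε) * ε) / 2, 0, 1) t :=
    hξt.prodMk ((hasDerivAt_const t y).prodMk (hasDerivAt_id t))
  have hFc : HasDerivAt (fun z => u ((2 * Real.sqrt x - z * ε) ^ 2 / 4) y z)
      (L (-((2 * Real.sqrt x - t * ε) * ε) / 2, 0, 1)) t :=
    by have := hL.comp_hasDerivAt t hcurve; exact this
  have hpdTval : pdT (fun x y t => Real.exp (ε * (4 * Real.sqrt x - t * ε) / 2) *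
        u ((2 * Real.sqrt x - t * ε) ^ 2 / 4) y t) x y t =
      Real.exp (ε * (4 * Real.sqrt x - t * ε) / 2) * (-(ε ^ 2) / 2) *
          u ((2 * Real.sqrt x - t * ε) ^ 2 / 4) y t +
        Real.exp (ε * (4 * Real.sqrt x - t * ε) / 2) *
          L (-((2 * Real.sqrt x - t * ε) * ε) / 2, 0, 1) :=
    (hφt.mul hFc).deriv
  have hlin : L (-((2 * Real.sqrt x - t * ε) * ε) / 2, 0, 1) =
      -((2 * Real.sqrt x - t * ε) * ε) / 2 * L (1, 0, 0) + L (0, 0, 1) := by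
    have h : ((-((2 * Real.sqrt x - t * ε) * ε) / 2 : ℝ), (0 : ℝ), (1 : ℝ)) =
        (-((2 * Real.sqrt x - t * ε) * ε) / 2 : ℝ) • ((1 : ℝ), (0 : ℝ), (0 : ℝ)) +
          ((0 : ℝ), (0 : ℝ), (1 : ℝ)) := by
      simp [Prod.ext_iff]
    rw [h, map_add, map_smul, smul_eq_mul]
  -- y derivatives
  have hpdYval : pdY (fun x y t => Real.exp (ε * (4 * Real.sqrt x - t * ε) / 2) *
        u ((2 * Real.sqrt x - t * ε) ^ 2 / 4) y t) x y t =
      Real.exp (ε * (4 * Real.sqrt x - t * ε) / 2) *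
        pdY u ((2 * Real.sqrt x - t * ε) ^ 2 / 4) y t := by
    show deriv (fun z => Real.exp (ε * (4 * Real.sqrt x - t * ε) / 2) *
        u ((2 * Real.sqrt x - t * ε) ^ 2 / 4) z t) y = _
    exact deriv_const_mul_field _
  have hpdYYval : pdYY (fun x y t => Real.exp (ε * (4 * Real.sqrt x - t * ε) / 2) *
        u ((2 * Real.sqrt x - t * ε) ^ 2 / 4) y t) x y t =
      Real.exp (ε * (4 * Real.sqrt x - t * ε) / 2) *
        pdYY u ((2 * Real.sqrt x - t * ε) ^ 2 / 4) y t := by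
    have h1 : (fun z => pdY (fun x y t => Real.exp (ε * (4 * Real.sqrt x - t * ε) / 2) *
        u ((2 * Real.sqrt x - t * ε) ^ 2 / 4) y t) x z t) =
        fun z => Real.exp (ε * (4 * Real.sqrt x - t * ε) / 2) *
          pdY u ((2 * Real.sqrt x - t * ε) ^ 2 / 4) z t := by
      funext z
      show deriv (fun z' => Real.exp (ε * (4 * Real.sqrt x - t * ε) / 2) *
          u ((2 * Real.sqrt x - t * ε) ^ 2 / 4) z' t) z = _
      exact deriv_const_mul_field _
    show deriv (fun z => pdY (fun x y t => Real.exp (ε * (4 * Real.sqrt x - t * ε) / 2) *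
        u ((2 * Real.sqrt x - t * ε) ^ 2 / 4) y t) x z t) y = _
    rw [h1]
    exact deriv_const_mul_field _
  -- the original equation at the shifted point
  have hEqn' : pdT u ((2 * Real.sqrt x - t * ε) ^ 2 / 4) y t =
      -((1 / 4 - 0 * ((2 * Real.sqrt x - t * ε) ^ 2 / 4)) *
          deriv (fun z => u z y t) ((2 * Real.sqrt x - t * ε) ^ 2 / 4) +
        (d - e * y) * pdY u ((2 * Real.sqrt x - t * ε) ^ 2 / 4) y t +
        (2 * Real.sqrt x - t * ε) ^ 2 / 4 / 2 *
          deriv (deriv (fun z => u z y t)) ((2 * Real.sqrt x - t * ε) ^ 2 / 4) +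
        y / 2 * pdYY u ((2 * Real.sqrt x - t * ε) ^ 2 / 4) y t) :=
    hEqn _ y t hX0 hy
  -- assemble
  show pdT (fun x y t => Real.exp (ε * (4 * Real.sqrt x - t * ε) / 2) *
        u ((2 * Real.sqrt x - t * ε) ^ 2 / 4) y t) x y t =
      -((1 / 4 - 0 * x) * pdX (fun x y t => Real.exp (ε * (4 * Real.sqrt x - t * ε) / 2) *
          u ((2 * Real.sqrt x - t * ε) ^ 2 / 4) y t) x y t +
        (d - e * y) * pdY (fun x y t => Real.exp (ε * (4 * Real.sqrt x - t * ε) / 2) *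
          u ((2 * Real.sqrt x - t * ε) ^ 2 / 4) y t) x y t +
        x / 2 * pdXX (fun x y t => Real.exp (ε * (4 * Real.sqrt x - t * ε) / 2) *
          u ((2 * Real.sqrt x - t * ε) ^ 2 / 4) y t) x y t +
        y / 2 * pdYY (fun x y t => Real.exp (ε * (4 * Real.sqrt x - t * ε) / 2) *
          u ((2 * Real.sqrt x - t * ε) ^ 2 / 4) y t) x y t)
  rw [hpdTval, hpdXval, hpdYval, hpdXXval, hpdYYval, hlin, ← hUx, ← hUt, hEqn']
  generalize hgen : Real.sqrt x = S
  have hS0 : S ≠ 0 := by rw [← hgen]; exact hsx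
  rw [show x = S ^ 2 from by rw [← hgen]; exact (Real.sq_sqrt hx.le).symm]
  field_simp
  ring
end

section
/- Assume a = 1/4 (with b, d, e ∈ ℝ arbitrary). Let u be a C³ solution of the Longstaff–Schwartz equation on Ω. Then the function w(x,y,t) = e^{-bt/2} · √x · ∂u/∂x(x,y,t) is also a solution of the Longstaff–Schwartz equation on Ω. -/
open Real Filter

private lemma hasDerivAt_lineX {F : Type*} [NormedAddCommGroup F] [NormedSpace ℝ F]
    {f : ℝ × ℝ × ℝ → F} {x y t : ℝ} (hf : DifferentiableAt ℝ f (x, y, t)) :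
    HasDerivAt (fun z => f (z, y, t)) (fderiv ℝ f (x, y, t) (1, 0, 0)) x := by
  have h1 : HasDerivAt (fun z : ℝ => ((z, y, t) : ℝ × ℝ × ℝ)) (1, 0, 0) x :=
    (hasDerivAt_id x).prodMk ((hasDerivAt_const x y).prodMk (hasDerivAt_const x t))
  exact hf.hasFDerivAt.comp_hasDerivAt x h1

private lemma hasDerivAt_lineY {F : Type*} [NormedAddCommGroup F] [NormedSpace ℝ F]
    {f : ℝ × ℝ × ℝ → F} {x y t : ℝ} (hf : DifferentiableAt ℝ f (x, y, t)) :
    HasDerivAt (fun z => f (x, z, t)) (fderiv ℝ f (x, y, t) (0, 1, 0)) y := by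
  have h1 : HasDerivAt (fun z : ℝ => ((x, z, t) : ℝ × ℝ × ℝ)) (0, 1, 0) y :=
    (hasDerivAt_const y x).prodMk ((hasDerivAt_id y).prodMk (hasDerivAt_const y t))
  exact hf.hasFDerivAt.comp_hasDerivAt y h1

private lemma hasDerivAt_lineT {F : Type*} [NormedAddCommGroup F] [NormedSpace ℝ F]
    {f : ℝ × ℝ × ℝ → F} {x y t : ℝ} (hf : DifferentiableAt ℝ f (x, y, t)) :
    HasDerivAt (fun z => f (x, y, z)) (fderiv ℝ f (x, y, t) (0, 0, 1)) t := by
  have h1 : HasDerivAt (fun z : ℝ => ((x, y, z) : ℝ × ℝ × ℝ)) (0, 0, 1) t :=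
    (hasDerivAt_const t x).prodMk ((hasDerivAt_const t y).prodMk (hasDerivAt_id t))
  exact hf.hasFDerivAt.comp_hasDerivAt t h1

set_option maxHeartbeats 4000000 in
/-- Infinitesimal symmetry action (`v₄ = √x e^{-bt/2} ∂/∂x` on solutions) when `a = 1/4`:
if `u` is a C³ solution of the Longstaff–Schwartz equation on `Ω`, then
`w(x,y,t) = e^{-bt/2} · √x · u_x(x,y,t)` is also a solution on `Ω`. -/
theorem ls_mu2_is_solution (a b d e : ℝ) (ha : a = 1 / 4)
    (u : ℝ → ℝ → ℝ → ℝ)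
    (hu : ContDiffOn ℝ 3 (fun p : ℝ × ℝ × ℝ => u p.1 p.2.1 p.2.2) Omega)
    (heq : ∀ x y t : ℝ, 0 < x → 0 < y → LSEq a b d e u x y t) :
    IsLSSolution a b d e
      (fun x y t => Real.exp (-(b * t) / 2) * Real.sqrt x * pdX u x y t) := by
  have hΩ : IsOpen Omega := (isOpen_lt continuous_const continuous_fst).inter
      (isOpen_lt continuous_const (continuous_fst.comp continuous_snd))
  set U : ℝ × ℝ × ℝ → ℝ := fun p => u p.1 p.2.1 p.2.2 with hUdef
  set G : ℝ × ℝ × ℝ → (ℝ × ℝ × ℝ) →L[ℝ] ℝ := fun q => fderiv ℝ U q with hGdef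
  have hGc : ContDiffOn ℝ 2 G Omega := hu.fderiv_of_isOpen hΩ (by norm_num)
  set G2 : ℝ × ℝ × ℝ → (ℝ × ℝ × ℝ) →L[ℝ] (ℝ × ℝ × ℝ) →L[ℝ] ℝ := fun q => fderiv ℝ G q with hG2def
  have hG2c : ContDiffOn ℝ 1 G2 Omega := hGc.fderiv_of_isOpen hΩ (by norm_num)
  have hUd : ∀ q ∈ Omega, HasFDerivAt U (G q) q := fun q hq =>
    ((hu.differentiableOn (by norm_num)).differentiableAt (hΩ.mem_nhds hq)).hasFDerivAt
  have hGd : ∀ q ∈ Omega, HasFDerivAt G (G2 q) q := fun q hq =>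
    ((hGc.differentiableOn (by norm_num)).differentiableAt (hΩ.mem_nhds hq)).hasFDerivAt
  have hG2d : ∀ q ∈ Omega, HasFDerivAt G2 (fderiv ℝ G2 q) q := fun q hq =>
    ((hG2c.differentiableOn (by norm_num)).differentiableAt (hΩ.mem_nhds hq)).hasFDerivAt
  -- directional derivative functions and their derivatives
  have hD1 : ∀ (v : ℝ × ℝ × ℝ), ∀ q ∈ Omega,
      HasFDerivAt (fun r => G r v) ((ContinuousLinearMap.apply ℝ ℝ v).comp (G2 q)) q := by
    intro v q hq
    have h0 := (ContinuousLinearMap.apply ℝ ℝ v).hasFDerivAt.comp q (hGd q hq)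
    simpa [Function.comp_def, ContinuousLinearMap.apply_apply] using h0
  have hT : ∀ (v w : ℝ × ℝ × ℝ), ∀ q ∈ Omega,
      HasFDerivAt (fun r => G2 r v w)
        ((ContinuousLinearMap.apply ℝ ℝ w).comp
          ((ContinuousLinearMap.apply ℝ ((ℝ × ℝ × ℝ) →L[ℝ] ℝ) v).comp (fderiv ℝ G2 q))) q := by
    intro v w q hq
    have h0 := HasFDerivAt.comp (g := ⇑(ContinuousLinearMap.apply ℝ ((ℝ × ℝ × ℝ) →L[ℝ] ℝ) v)) q
      (ContinuousLinearMap.apply ℝ ((ℝ × ℝ × ℝ) →L[ℝ] ℝ) v).hasFDerivAt (hG2d q hq)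
    have h1 : HasFDerivAt (fun r => G2 r v)
        ((ContinuousLinearMap.apply ℝ ((ℝ × ℝ × ℝ) →L[ℝ] ℝ) v).comp (fderiv ℝ G2 q)) q := by
      simpa [Function.comp_def, ContinuousLinearMap.apply_apply] using h0
    have h2 := (ContinuousLinearMap.apply ℝ ℝ w).hasFDerivAt.comp q h1
    simpa [Function.comp_def, ContinuousLinearMap.apply_apply] using h2
  have hTfd : ∀ (v w : ℝ × ℝ × ℝ), ∀ q ∈ Omega, ∀ z,
      fderiv ℝ (fun r => G2 r v w) q z = fderiv ℝ G2 q z v w := by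
    intro v w q hq z
    rw [(hT v w q hq).fderiv]
    simp [ContinuousLinearMap.comp_apply, ContinuousLinearMap.apply_apply]
  have hD1fd : ∀ (v : ℝ × ℝ × ℝ), ∀ q ∈ Omega, ∀ z,
      fderiv ℝ (fun r => G r v) q z = G2 q z v := by
    intro v q hq z
    rw [(hD1 v q hq).fderiv]
    simp [ContinuousLinearMap.comp_apply, ContinuousLinearMap.apply_apply]
  -- symmetry of second and third derivatives
  have sym2 : ∀ q ∈ Omega, ∀ v w, G2 q v w = G2 q w v := by
    intro q hq v w
    exact second_derivative_symmetric_of_eventually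
      ((hΩ.eventually_mem hq).mono (fun r hr => hUd r hr)) (hGd q hq) v w
  have sym3a : ∀ q ∈ Omega, ∀ z v w, fderiv ℝ G2 q z v w = fderiv ℝ G2 q v z w := by
    intro q hq z v w
    have := second_derivative_symmetric_of_eventually
      ((hΩ.eventually_mem hq).mono (fun r hr => hGd r hr)) (hG2d q hq) z v
    rw [this]
  have sym3b : ∀ q ∈ Omega, ∀ z v w, fderiv ℝ G2 q z v w = fderiv ℝ G2 q z w v := by
    intro q hq z v w
    have hev : (fun r => G2 r v w) =ᶠ[nhds q] (fun r => G2 r w v) :=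
      (hΩ.eventually_mem hq).mono (fun r hr => sym2 r hr v w)
    have h3 : fderiv ℝ (fun r => G2 r v w) q = fderiv ℝ (fun r => G2 r w v) q := hev.fderiv_eq
    rw [← hTfd v w q hq z, h3, hTfd w v q hq z]
  -- line derivatives
  have lineXG : ∀ (v : ℝ × ℝ × ℝ) (x y t : ℝ), 0 < x → 0 < y →
      HasDerivAt (fun z => G (z, y, t) v) (G2 (x, y, t) (1, 0, 0) v) x := by
    intro v x y t hx hy
    have hq : ((x, y, t) : ℝ × ℝ × ℝ) ∈ Omega := ⟨hx, hy⟩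
    have h := hasDerivAt_lineX (f := fun r => G r v) (hD1 v _ hq).differentiableAt
    rwa [hD1fd v _ hq (1, 0, 0)] at h
  have lineYG : ∀ (v : ℝ × ℝ × ℝ) (x y t : ℝ), 0 < x → 0 < y →
      HasDerivAt (fun z => G (x, z, t) v) (G2 (x, y, t) (0, 1, 0) v) y := by
    intro v x y t hx hy
    have hq : ((x, y, t) : ℝ × ℝ × ℝ) ∈ Omega := ⟨hx, hy⟩
    have h := hasDerivAt_lineY (f := fun r => G r v) (hD1 v _ hq).differentiableAt
    rwa [hD1fd v _ hq (0, 1, 0)] at h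
  have lineTG : ∀ (v : ℝ × ℝ × ℝ) (x y t : ℝ), 0 < x → 0 < y →
      HasDerivAt (fun z => G (x, y, z) v) (G2 (x, y, t) (0, 0, 1) v) t := by
    intro v x y t hx hy
    have hq : ((x, y, t) : ℝ × ℝ × ℝ) ∈ Omega := ⟨hx, hy⟩
    have h := hasDerivAt_lineT (f := fun r => G r v) (hD1 v _ hq).differentiableAt
    rwa [hD1fd v _ hq (0, 0, 1)] at h
  have lineXT : ∀ (v w : ℝ × ℝ × ℝ) (x y t : ℝ), 0 < x → 0 < y →
      HasDerivAt (fun z => G2 (z, y, t) v w) (fderiv ℝ G2 (x, y, t) (1, 0, 0) v w) x := by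
    intro v w x y t hx hy
    have hq : ((x, y, t) : ℝ × ℝ × ℝ) ∈ Omega := ⟨hx, hy⟩
    have h := hasDerivAt_lineX (f := fun r => G2 r v w) (hT v w _ hq).differentiableAt
    rwa [hTfd v w _ hq (1, 0, 0)] at h
  have lineYT : ∀ (v w : ℝ × ℝ × ℝ) (x y t : ℝ), 0 < x → 0 < y →
      HasDerivAt (fun z => G2 (x, z, t) v w) (fderiv ℝ G2 (x, y, t) (0, 1, 0) v w) y := by
    intro v w x y t hx hy
    have hq : ((x, y, t) : ℝ × ℝ × ℝ) ∈ Omega := ⟨hx, hy⟩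
    have h := hasDerivAt_lineY (f := fun r => G2 r v w) (hT v w _ hq).differentiableAt
    rwa [hTfd v w _ hq (0, 1, 0)] at h
  -- partial derivatives of u
  have hpdX : ∀ x y t : ℝ, 0 < x → 0 < y → pdX u x y t = G (x, y, t) (1, 0, 0) := by
    intro x y t hx hy
    exact (hasDerivAt_lineX (f := U) ((hUd _ ⟨hx, hy⟩).differentiableAt)).deriv
  have hpdY : ∀ x y t : ℝ, 0 < x → 0 < y → pdY u x y t = G (x, y, t) (0, 1, 0) := by
    intro x y t hx hy
    exact (hasDerivAt_lineY (f := U) ((hUd _ ⟨hx, hy⟩).differentiableAt)).deriv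
  have hpdT : ∀ x y t : ℝ, 0 < x → 0 < y → pdT u x y t = G (x, y, t) (0, 0, 1) := by
    intro x y t hx hy
    exact (hasDerivAt_lineT (f := U) ((hUd _ ⟨hx, hy⟩).differentiableAt)).deriv
  have hpdXX : ∀ x y t : ℝ, 0 < x → 0 < y →
      pdXX u x y t = G2 (x, y, t) (1, 0, 0) (1, 0, 0) := by
    intro x y t hx hy
    have hev : (fun z => pdX u z y t) =ᶠ[nhds x] (fun z => G (z, y, t) (1, 0, 0)) := by
      filter_upwards [eventually_gt_nhds hx] with z hz
      exact hpdX z y t hz hy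
    show deriv (fun z => pdX u z y t) x = _
    rw [hev.deriv_eq, (lineXG (1, 0, 0) x y t hx hy).deriv]
  have hpdYY : ∀ x y t : ℝ, 0 < x → 0 < y →
      pdYY u x y t = G2 (x, y, t) (0, 1, 0) (0, 1, 0) := by
    intro x y t hx hy
    have hev : (fun z => pdY u x z t) =ᶠ[nhds y] (fun z => G (x, z, t) (0, 1, 0)) := by
      filter_upwards [eventually_gt_nhds hy] with z hz
      exact hpdY x z t hx hz
    show deriv (fun z => pdY u x z t) y = _
    rw [hev.deriv_eq, (lineYG (0, 1, 0) x y t hx hy).deriv]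
  -- partial derivatives of w
  have hWx : ∀ x y t : ℝ, 0 < x → 0 < y →
      pdX (fun x y t => Real.exp (-(b * t) / 2) * Real.sqrt x * pdX u x y t) x y t =
        Real.exp (-(b * t) / 2) * (2 * Real.sqrt x)⁻¹ * G (x, y, t) (1, 0, 0) +
          Real.exp (-(b * t) / 2) * Real.sqrt x * G2 (x, y, t) (1, 0, 0) (1, 0, 0) := by
    intro x y t hx hy
    have hev : (fun z => Real.exp (-(b * t) / 2) * Real.sqrt z * pdX u z y t) =ᶠ[nhds x]
        (fun z => Real.exp (-(b * t) / 2) * Real.sqrt z * G (z, y, t) (1, 0, 0)) := by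
      filter_upwards [eventually_gt_nhds hx] with z hz
      rw [hpdX z y t hz hy]
    show deriv (fun z => Real.exp (-(b * t) / 2) * Real.sqrt z * pdX u z y t) x = _
    rw [hev.deriv_eq]
    have h := (((Real.hasDerivAt_sqrt hx.ne').const_mul
        (Real.exp (-(b * t) / 2))).mul (lineXG (1, 0, 0) x y t hx hy))
    exact (h.congr_deriv (by ring)).deriv
  have hWy : ∀ x y t : ℝ, 0 < x → 0 < y →
      pdY (fun x y t => Real.exp (-(b * t) / 2) * Real.sqrt x * pdX u x y t) x y t =
        Real.exp (-(b * t) / 2) * Real.sqrt x * G2 (x, y, t) (0, 1, 0) (1, 0, 0) := by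
    intro x y t hx hy
    have hev : (fun z => Real.exp (-(b * t) / 2) * Real.sqrt x * pdX u x z t) =ᶠ[nhds y]
        (fun z => Real.exp (-(b * t) / 2) * Real.sqrt x * G (x, z, t) (1, 0, 0)) := by
      filter_upwards [eventually_gt_nhds hy] with z hz
      rw [hpdX x z t hx hz]
    show deriv (fun z => Real.exp (-(b * t) / 2) * Real.sqrt x * pdX u x z t) y = _
    rw [hev.deriv_eq]
    have h := (lineYG (1, 0, 0) x y t hx hy).const_mul
      (Real.exp (-(b * t) / 2) * Real.sqrt x)
    exact (h.congr_deriv (by ring)).deriv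
  have hWt : ∀ x y t : ℝ, 0 < x → 0 < y →
      pdT (fun x y t => Real.exp (-(b * t) / 2) * Real.sqrt x * pdX u x y t) x y t =
        Real.exp (-(b * t) / 2) * (-b / 2) * Real.sqrt x * G (x, y, t) (1, 0, 0) +
          Real.exp (-(b * t) / 2) * Real.sqrt x * G2 (x, y, t) (0, 0, 1) (1, 0, 0) := by
    intro x y t hx hy
    have hev : (fun z => Real.exp (-(b * z) / 2) * Real.sqrt x * pdX u x y z) =ᶠ[nhds t]
        (fun z => Real.exp (-(b * z) / 2) * Real.sqrt x * G (x, y, z) (1, 0, 0)) := by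
      filter_upwards with z
      rw [hpdX x y z hx hy]
    show deriv (fun z => Real.exp (-(b * z) / 2) * Real.sqrt x * pdX u x y z) t = _
    rw [hev.deriv_eq]
    have h0 : HasDerivAt (fun z : ℝ => -(b * z) / 2) (-b / 2) t := by
      simpa using (((hasDerivAt_id t).const_mul b).neg.div_const 2)
    have h := ((h0.exp.mul_const (Real.sqrt x)).mul (lineTG (1, 0, 0) x y t hx hy))
    exact (h.congr_deriv (by ring)).deriv
  have hWxx : ∀ x y t : ℝ, 0 < x → 0 < y →
      pdXX (fun x y t => Real.exp (-(b * t) / 2) * Real.sqrt x * pdX u x y t) x y t =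
        Real.exp (-(b * t) / 2) * (-(Real.sqrt x ^ 3)⁻¹ / 4) * G (x, y, t) (1, 0, 0) +
          Real.exp (-(b * t) / 2) * (Real.sqrt x)⁻¹ * G2 (x, y, t) (1, 0, 0) (1, 0, 0) +
          Real.exp (-(b * t) / 2) * Real.sqrt x *
            fderiv ℝ G2 (x, y, t) (1, 0, 0) (1, 0, 0) (1, 0, 0) := by
    intro x y t hx hy
    have hev : (fun z => pdX (fun x y t => Real.exp (-(b * t) / 2) * Real.sqrt x * pdX u x y t) z y t)
        =ᶠ[nhds x]
        (fun z => Real.exp (-(b * t) / 2) * (2 * Real.sqrt z)⁻¹ * G (z, y, t) (1, 0, 0) +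
          Real.exp (-(b * t) / 2) * Real.sqrt z * G2 (z, y, t) (1, 0, 0) (1, 0, 0)) := by
      filter_upwards [eventually_gt_nhds hx] with z hz
      exact hWx z y t hz hy
    show deriv (fun z =>
        pdX (fun x y t => Real.exp (-(b * t) / 2) * Real.sqrt x * pdX u x y t) z y t) x = _
    rw [hev.deriv_eq]
    have h2s : HasDerivAt (fun z : ℝ => 2 * Real.sqrt z) (2 * (1 / (2 * Real.sqrt x))) x :=
      (Real.hasDerivAt_sqrt hx.ne').const_mul 2
    have hne : (2 : ℝ) * Real.sqrt x ≠ 0 := by positivity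
    have hinv := h2s.inv hne
    have h := ((((hinv.const_mul (Real.exp (-(b * t) / 2))).mul
        (lineXG (1, 0, 0) x y t hx hy))).add
      (((Real.hasDerivAt_sqrt hx.ne').const_mul (Real.exp (-(b * t) / 2))).mul
        (lineXT (1, 0, 0) (1, 0, 0) x y t hx hy)))
    refine (h.congr_deriv ?_).deriv
    have hs0 : Real.sqrt x ≠ 0 := (Real.sqrt_pos.2 hx).ne'
    simp only [Pi.inv_apply]
    field_simp
    ring
  have hWyy : ∀ x y t : ℝ, 0 < x → 0 < y →
      pdYY (fun x y t => Real.exp (-(b * t) / 2) * Real.sqrt x * pdX u x y t) x y t =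
        Real.exp (-(b * t) / 2) * Real.sqrt x *
          fderiv ℝ G2 (x, y, t) (0, 1, 0) (0, 1, 0) (1, 0, 0) := by
    intro x y t hx hy
    have hev : (fun z => pdY (fun x y t => Real.exp (-(b * t) / 2) * Real.sqrt x * pdX u x y t) x z t)
        =ᶠ[nhds y]
        (fun z => Real.exp (-(b * t) / 2) * Real.sqrt x * G2 (x, z, t) (0, 1, 0) (1, 0, 0)) := by
      filter_upwards [eventually_gt_nhds hy] with z hz
      exact hWy x z t hx hz
    show deriv (fun z =>
        pdY (fun x y t => Real.exp (-(b * t) / 2) * Real.sqrt x * pdX u x y t) x z t) y = _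
    rw [hev.deriv_eq]
    have h := (lineYT (0, 1, 0) (1, 0, 0) x y t hx hy).const_mul
      (Real.exp (-(b * t) / 2) * Real.sqrt x)
    exact (h.congr_deriv (by ring)).deriv
  -- the differentiated equation
  have hkey : ∀ x y t : ℝ, 0 < x → 0 < y →
      G2 (x, y, t) (1, 0, 0) (0, 0, 1) =
        -((0 - b * 1) * G (x, y, t) (1, 0, 0) +
          (a - b * x) * G2 (x, y, t) (1, 0, 0) (1, 0, 0) +
          (d - e * y) * G2 (x, y, t) (1, 0, 0) (0, 1, 0) +
          (1 / 2 * G2 (x, y, t) (1, 0, 0) (1, 0, 0) +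
            x / 2 * fderiv ℝ G2 (x, y, t) (1, 0, 0) (1, 0, 0) (1, 0, 0)) +
          y / 2 * fderiv ℝ G2 (x, y, t) (1, 0, 0) (0, 1, 0) (0, 1, 0)) := by
    intro x y t hx hy
    have hev : (fun z => G (z, y, t) (0, 0, 1)) =ᶠ[nhds x]
        (fun z => -((a - b * z) * G (z, y, t) (1, 0, 0) + (d - e * y) * G (z, y, t) (0, 1, 0) +
          z / 2 * G2 (z, y, t) (1, 0, 0) (1, 0, 0) +
          y / 2 * G2 (z, y, t) (0, 1, 0) (0, 1, 0))) := by
      filter_upwards [eventually_gt_nhds hx] with z hz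
      have h' : pdT u z y t =
          -((a - b * z) * pdX u z y t + (d - e * y) * pdY u z y t +
            z / 2 * pdXX u z y t + y / 2 * pdYY u z y t) := heq z y t hz hy
      rw [hpdT z y t hz hy, hpdX z y t hz hy, hpdY z y t hz hy, hpdXX z y t hz hy,
        hpdYY z y t hz hy] at h'
      exact h'
    have hA := ((hasDerivAt_const x a).sub ((hasDerivAt_id x).const_mul b)).mul
      (lineXG (1, 0, 0) x y t hx hy)
    have hB := (lineXG (0, 1, 0) x y t hx hy).const_mul (d - e * y)
    have hC := ((hasDerivAt_id x).div_const 2).mul (lineXT (1, 0, 0) (1, 0, 0) x y t hx hy)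
    have hD := (lineXT (0, 1, 0) (0, 1, 0) x y t hx hy).const_mul (y / 2)
    have hR := (((hA.add hB).add hC).add hD).neg
    refine (lineXG (0, 0, 1) x y t hx hy).deriv.symm.trans
      (hev.deriv_eq.trans ((hR.congr_deriv (by simp only [id_eq, Pi.sub_apply]; try ring)).deriv))
  constructor
  · -- smoothness
    have hexp : ContDiff ℝ 2 (fun p : ℝ × ℝ × ℝ => Real.exp (-(b * p.2.2) / 2)) :=
      Real.contDiff_exp.comp
        (((contDiff_const.mul (contDiff_snd.comp contDiff_snd)).neg).div_const 2)
    have hsqrt : ContDiffOn ℝ 2 (fun p : ℝ × ℝ × ℝ => Real.sqrt p.1) Omega := fun p hp =>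
      ((Real.contDiffAt_sqrt (hp.1.ne')).comp p contDiff_fst.contDiffAt).contDiffWithinAt
    have hGe : ContDiffOn ℝ 2 (fun q => G q ((1 : ℝ), (0 : ℝ), (0 : ℝ))) Omega :=
      (ContinuousLinearMap.apply ℝ ℝ ((1 : ℝ), (0 : ℝ), (0 : ℝ))).contDiff.comp_contDiffOn hGc
    have hsm : ContDiffOn ℝ 2
        (fun p : ℝ × ℝ × ℝ => Real.exp (-(b * p.2.2) / 2) * Real.sqrt p.1 *
          G p (1, 0, 0)) Omega :=
      ((hexp.contDiffOn.mul hsqrt).mul hGe)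
    refine hsm.congr ?_
    rintro ⟨x, y, t⟩ hp
    simp only
    rw [hpdX x y t hp.1 hp.2]
  · -- the equation
    intro x y t hx hy
    have hp : ((x, y, t) : ℝ × ℝ × ℝ) ∈ Omega := ⟨hx, hy⟩
    show pdT (fun x y t => Real.exp (-(b * t) / 2) * Real.sqrt x * pdX u x y t) x y t =
      -((a - b * x) * pdX (fun x y t => Real.exp (-(b * t) / 2) * Real.sqrt x * pdX u x y t) x y t +
        (d - e * y) * pdY (fun x y t => Real.exp (-(b * t) / 2) * Real.sqrt x * pdX u x y t) x y t +
        x / 2 * pdXX (fun x y t => Real.exp (-(b * t) / 2) * Real.sqrt x * pdX u x y t) x y t +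
        y / 2 * pdYY (fun x y t => Real.exp (-(b * t) / 2) * Real.sqrt x * pdX u x y t) x y t)
    rw [hWt x y t hx hy, hWx x y t hx hy, hWy x y t hx hy, hWxx x y t hx hy, hWyy x y t hx hy]
    rw [sym2 _ hp ((0 : ℝ), (0 : ℝ), (1 : ℝ)) (1, 0, 0), hkey x y t hx hy]
    rw [sym2 _ hp ((0 : ℝ), (1 : ℝ), (0 : ℝ)) (1, 0, 0)]
    rw [show fderiv ℝ G2 (x, y, t) (0, 1, 0) (0, 1, 0) (1, 0, 0) =
        fderiv ℝ G2 (x, y, t) (1, 0, 0) (0, 1, 0) (0, 1, 0) by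
      rw [sym3b _ hp (0, 1, 0) (0, 1, 0) (1, 0, 0), sym3a _ hp (0, 1, 0) (1, 0, 0) (0, 1, 0)]]
    subst ha
    obtain ⟨s, hs, rfl⟩ : ∃ s : ℝ, 0 < s ∧ s ^ 2 = x :=
      ⟨Real.sqrt x, Real.sqrt_pos.2 hx, Real.sq_sqrt hx.le⟩
    rw [Real.sqrt_sq hs.le]
    field_simp
    ring
end
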